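/- arXiv:1806.03672 — 2 statements merged into one kernel-verified Lean document; each statement's English description precedes it below -/
import Mathlib

section
/- Let G be a finite non-nilpotent group in which every non-subnormal primary subgroup satisfies the Frobenius normalizer condition. Then for every maximal nilpotent subgroup V of G with F(G)V = G, the normal core V_G equals Z_∞(G). -/
open Subgroup

/-- The supremum of a family of normal subgroups is normal. -/
theorem Subgroup.normal_iSup_of_normal {G : Type*} [Group G] {ι : Sort*} (H : ι → Subgroup G)
    (h : ∀ i, (H i).Normal) : (⨆ i, H i).Normal := by
  constructor
  intro x hx g
  refine Subgroup.iSup_induction (C := fun y => g * y * g⁻¹ ∈ ⨆ i, H i) H hx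
    (fun i y hy => le_iSup H i ((h i).conj_mem y hy g)) (by simpa using Subgroup.one_mem _) ?_
  intro a b ha hb
  have heq : g * (a * b) * g⁻¹ = (g * a * g⁻¹) * (g * b * g⁻¹) := by group
  rw [heq]; exact mul_mem ha hb

/-- The centralizer `C_G(P)` is a normal subgroup of the normalizer `N_G(P)`. -/
instance Subgroup.centralizer_subgroupOf_normalizer_normal {G : Type*} [Group G]
    (P : Subgroup G) : ((Subgroup.centralizer (P : Set G)).subgroupOf (normalizer (P : Set G))).Normal :=
  P.normalizerMonoidHom_ker ▸ P.normalizerMonoidHom.normal_ker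

/-- A subgroup `P` (a `p`-subgroup) satisfies the Frobenius normalizer condition in `G`
if `N_G(P)/C_G(P)` is a `p`-group. -/
def FrobeniusNC {G : Type*} [Group G] (p : ℕ) (P : Subgroup G) : Prop :=
  IsPGroup p (normalizer (P : Set G) ⧸ (Subgroup.centralizer (P : Set G)).subgroupOf (normalizer (P : Set G)))

/-- A subgroup is subnormal if there is a chain from it to the whole group in which
each term is normal in the next. -/
def IsSubnormal {G : Type*} [Group G] (H : Subgroup G) : Prop :=
  ∃ (n : ℕ) (c : ℕ → Subgroup G), c 0 = H ∧ c n = ⊤ ∧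
    ∀ i < n, c i ≤ c (i + 1) ∧ ((c i).subgroupOf (c (i + 1))).Normal

/-- The hypercenter `Z_∞(G)`: the largest term of the upper central series. -/
def hypercenter (G : Type*) [Group G] : Subgroup G :=
  ⨆ n, Subgroup.upperCentralSeries G n

instance hypercenter_normal (G : Type*) [Group G] : (hypercenter G).Normal :=
  Subgroup.normal_iSup_of_normal _ fun _ => inferInstance

/-- The Fitting subgroup `F(G)`: the largest normal nilpotent subgroup (of a finite group). -/
def FittingSubgroup (G : Type*) [Group G] : Subgroup G :=
  ⨆ (H : Subgroup G) (_ : H.Normal ∧ Group.IsNilpotent H), H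

instance FittingSubgroup_normal (G : Type*) [Group G] : (FittingSubgroup G).Normal :=
  Subgroup.normal_iSup_of_normal _ fun H =>
    Subgroup.normal_iSup_of_normal _ fun hH => hH.1

/-- `F_0(G)`: the product of all normal Sylow subgroups of `G`. -/
def normalSylowProduct (G : Type*) [Group G] : Subgroup G :=
  ⨆ (p : ℕ) (_ : p.Prime) (P : Sylow p G) (_ : (P : Subgroup G).Normal), (P : Subgroup G)

instance normalSylowProduct_normal (G : Type*) [Group G] : (normalSylowProduct G).Normal := by
  apply Subgroup.normal_iSup_of_normal; intro p
  apply Subgroup.normal_iSup_of_normal; intro _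
  apply Subgroup.normal_iSup_of_normal; intro P
  apply Subgroup.normal_iSup_of_normal; intro hP
  exact hP

/-- A Carter subgroup: a nilpotent self-normalizing subgroup. -/
def IsCarterSubgroup {G : Type*} [Group G] (U : Subgroup G) : Prop :=
  Group.IsNilpotent U ∧ normalizer (U : Set G) = U

/-- A maximal nilpotent subgroup: maximal under inclusion among nilpotent subgroups. -/
def IsMaximalNilpotent {G : Type*} [Group G] (U : Subgroup G) : Prop :=
  Group.IsNilpotent U ∧ ∀ V : Subgroup G, Group.IsNilpotent V → U ≤ V → V = U

section AuxiliaryLemmas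

open Subgroup MulAction

universe u

variable {G : Type u} [Group G]

lemma aux_comap_ucs_le (A : Subgroup G) [A.Normal] {m : ℕ}
    (hA : A ≤ Subgroup.upperCentralSeries G m) :
    ∀ j, (Subgroup.upperCentralSeries (G ⧸ A) j).comap (QuotientGroup.mk' A) ≤
      Subgroup.upperCentralSeries G (m + j) := by
  intro j
  induction j with
  | zero =>
    intro x hx
    have hxA : x ∈ A := by
      simpa [Subgroup.mem_comap, QuotientGroup.eq_one_iff] using hx
    exact hA hxA
  | succ j ih =>
    intro x hx
    rw [Subgroup.mem_comap, Subgroup.mem_upperCentralSeries_succ_iff] at hx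
    rw [show m + (j + 1) = (m + j) + 1 from rfl, Subgroup.mem_upperCentralSeries_succ_iff]
    intro y
    refine ih ?_
    rw [Subgroup.mem_comap]
    simpa using hx ((QuotientGroup.mk' A) y)

lemma aux_nilpotent_of_quotient {A : Subgroup G} [A.Normal] {m : ℕ}
    (hA : A ≤ Subgroup.upperCentralSeries G m) (hQ : Group.IsNilpotent (G ⧸ A)) :
    Group.IsNilpotent G := by
  obtain ⟨n, hn⟩ := hQ.nilpotent'
  refine ⟨⟨m + n, ?_⟩⟩
  rw [eq_top_iff]
  intro x _
  refine aux_comap_ucs_le A hA n ?_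
  rw [Subgroup.mem_comap, hn]
  trivial

lemma aux_ucs_subgroupOf_le (K : Subgroup G) :
    ∀ n, (Subgroup.upperCentralSeries G n).subgroupOf K ≤ Subgroup.upperCentralSeries K n := by
  intro n
  induction n with
  | zero =>
    intro x hx
    have hx1 : (x : G) = 1 := by simpa [Subgroup.mem_subgroupOf] using hx
    simpa using Subtype.ext hx1
  | succ n ih =>
    intro x hx
    rw [Subgroup.mem_subgroupOf, Subgroup.mem_upperCentralSeries_succ_iff] at hx
    rw [Subgroup.mem_upperCentralSeries_succ_iff]
    intro y
    refine ih ?_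
    rw [Subgroup.mem_subgroupOf]
    exact hx (y : G)

end AuxiliaryLemmas
section AuxiliaryLemmas2

open Subgroup MulAction

universe u

variable {G : Type u} [Group G]

lemma aux_exists_hypercenter_eq (G : Type*) [Group G] [Finite G] :
    ∃ m, hypercenter G = Subgroup.upperCentralSeries G m := by
  haveI : Finite (Subgroup G) :=
    Finite.of_injective (fun H : Subgroup G => (H : Set G)) SetLike.coe_injective
  obtain ⟨Z, hZmem, hZmax⟩ := Set.Finite.exists_maximalFor id
    (Set.range (Subgroup.upperCentralSeries G)) (Set.toFinite _) ⟨_, Set.mem_range_self 0⟩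
  obtain ⟨m, rfl⟩ := hZmem
  refine ⟨m, le_antisymm (iSup_le fun n => ?_) (le_iSup (Subgroup.upperCentralSeries G) m)⟩
  have h1 : Subgroup.upperCentralSeries G m ≤ Subgroup.upperCentralSeries G (max m n) :=
    Subgroup.upperCentralSeries_mono G (le_max_left m n)
  have h2 := hZmax ⟨max m n, rfl⟩ h1
  calc Subgroup.upperCentralSeries G n ≤ Subgroup.upperCentralSeries G (max m n) :=
        Subgroup.upperCentralSeries_mono G (le_max_right m n)
    _ ≤ Subgroup.upperCentralSeries G m := h2

lemma aux_exists_pCore (p : ℕ) (X : Type*) [Group X] [Finite X] :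
    ∃ M : Subgroup X, M.Normal ∧ IsPGroup p M ∧
      ∀ K : Subgroup X, K.Normal → IsPGroup p K → K ≤ M := by
  haveI : Finite (Subgroup X) :=
    Finite.of_injective (fun H : Subgroup X => (H : Set X)) SetLike.coe_injective
  obtain ⟨M, hMmem, hMmax⟩ := Set.Finite.exists_maximalFor id
    {K : Subgroup X | K.Normal ∧ IsPGroup p K} (Set.toFinite _)
    ⟨⊥, inferInstance, IsPGroup.of_bot⟩
  refine ⟨M, hMmem.1, hMmem.2, fun K hKn hKp => ?_⟩
  haveI := hMmem.1
  haveI := hKn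
  have hsup : IsPGroup p (K ⊔ M : Subgroup X) := IsPGroup.to_sup_of_normal_right hKp hMmem.2
  have heq := hMmax ⟨inferInstance, hsup⟩ le_sup_right
  exact le_sup_left.trans heq

open scoped commutatorElement in
lemma aux_commute_of_coprime {A B : Subgroup G} (hA : A.Normal) (hB : B.Normal)
    (h : Nat.Coprime (Nat.card A) (Nat.card B)) :
    ∀ a ∈ A, ∀ b ∈ B, a * b = b * a := by
  intro a ha b hb
  rw [← commutatorElement_eq_one_iff_mul_comm]
  have h1 : ⁅a, b⁆ ∈ A ⊓ B := by
    constructor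
    · show a * b * a⁻¹ * b⁻¹ ∈ A
      have e : a * b * a⁻¹ * b⁻¹ = a * (b * a⁻¹ * b⁻¹) := by group
      rw [e]
      exact mul_mem ha (hA.conj_mem a⁻¹ (inv_mem ha) b)
    · show a * b * a⁻¹ * b⁻¹ ∈ B
      exact mul_mem (hB.conj_mem b hb a) (inv_mem hb)
  rw [inf_eq_bot_of_coprime h] at h1
  exact Subgroup.mem_bot.mp h1

instance aux_centralizer_normal {N : Subgroup G} [hN : N.Normal] :
    (Subgroup.centralizer (N : Set G)).Normal := by
  constructor
  intro c hc g
  rw [Subgroup.mem_centralizer_iff] at hc ⊢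
  intro n hn
  have h1 : g⁻¹ * n * g ∈ N := by
    have := hN.conj_mem n hn g⁻¹
    simpa using this
  have h2 := hc _ h1
  have e : n * (g * c * g⁻¹) = g * ((g⁻¹ * n * g) * c) * g⁻¹ := by group
  rw [e, h2]
  group

lemma aux_map_subtype_normal {K : Subgroup G} [hK : K.Normal] (L : Subgroup K)
    [hL : L.Characteristic] : (L.map K.subtype).Normal := by
  constructor
  intro x hx g
  obtain ⟨l, hl, rfl⟩ := hx
  let φ : ↥K ≃* ↥K := MulAut.conjNormal g
  have h1 : l ∈ Subgroup.comap φ.toMonoidHom L := by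
    rw [Subgroup.characteristic_iff_comap_eq.mp hL φ]
    exact hl
  exact ⟨φ l, Subgroup.mem_comap.mp h1, MulAut.conjNormal_apply g l⟩

lemma aux_iSup_sylow_eq_top (X : Type*) [Group X] [Finite X] :
    (⨆ (p : ℕ) (_ : p.Prime) (P : Sylow p X), (P : Subgroup X)) = ⊤ := by
  set J := (⨆ (p : ℕ) (_ : p.Prime) (P : Sylow p X), (P : Subgroup X)) with hJ
  have hX0 : Nat.card X ≠ 0 := Nat.card_pos.ne'
  have hJ0 : Nat.card J ≠ 0 := Nat.card_pos.ne'
  have hdvd : Nat.card X ∣ Nat.card J := by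
    rw [← Nat.factorization_le_iff_dvd hX0 hJ0, Finsupp.le_def]
    intro p
    by_cases hp : p.Prime
    · haveI : Fact p.Prime := ⟨hp⟩
      obtain ⟨P⟩ : Nonempty (Sylow p X) := inferInstance
      have hle : (P : Subgroup X) ≤ J :=
        le_iSup_of_le p (le_iSup_of_le hp (le_iSup (fun Q : Sylow p X => (Q : Subgroup X)) P))
      have hdvd1 : p ^ (Nat.card X).factorization p ∣ Nat.card J := by
        rw [← Sylow.card_eq_multiplicity P]
        exact Subgroup.card_dvd_of_le hle
      exact (Nat.Prime.pow_dvd_iff_le_factorization hp hJ0).mp hdvd1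
    · simp [Nat.factorization_eq_zero_of_not_prime _ hp]
  exact Subgroup.eq_top_of_card_eq J
    (Nat.dvd_antisymm (Subgroup.card_subgroup_dvd_card J) hdvd)

lemma aux_sylow_decomp [Finite G] (H : Subgroup G) :
    H = ⨆ (q : ℕ) (_ : q.Prime) (Q : Sylow q ↥H), (Q : Subgroup ↥H).map H.subtype := by
  conv_lhs => rw [← Subgroup.range_subtype H, MonoidHom.range_eq_map,
    ← aux_iSup_sylow_eq_top ↥H]
  simp only [Subgroup.map_iSup]

lemma aux_sylow_normal {X : Type*} [Group X] [Finite X] (hX : Group.IsNilpotent X)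
    {q : ℕ} (hq : q.Prime) (Q : Sylow q X) : (Q : Subgroup X).Normal := by
  have h4 : ∀ (p : ℕ) (_hp : Fact p.Prime) (P : Sylow p X), (↑P : Subgroup X).Normal :=
    ((isNilpotent_of_finite_tfae (G := X)).out 0 3).mp hX
  exact h4 q ⟨hq⟩ Q

end AuxiliaryLemmas2
section AuxiliaryLemmas3

open Subgroup MulAction

universe u

lemma aux_le_hypercenter_of_pgroup_quotient :
    ∀ (k : ℕ) (G : Type u) [Group G] [Finite G] (p : ℕ), p.Prime →
    ∀ (N : Subgroup G) [N.Normal], IsPGroup p N →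
    IsPGroup p (G ⧸ Subgroup.centralizer (N : Set G)) →
    Nat.card N ≤ k → N ≤ hypercenter G := by
  intro k
  induction k with
  | zero =>
    intro G _ _ p _ N _ _ _ hcard
    have := Nat.card_pos (α := ↥N)
    omega
  | succ k IH =>
    intro G _ _ p hp N hNn hNp hq hcard
    by_cases hbot : N = ⊥
    · rw [hbot]; exact bot_le
    haveI : Fact p.Prime := ⟨hp⟩
    haveI : Finite (Sylow p G) :=
      Finite.of_injective (fun P : Sylow p G => (P : Subgroup G))
        (fun P Q h => Sylow.ext h)
    obtain ⟨S, hNS⟩ := hNp.exists_le_sylow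
    -- `S ⊔ C = ⊤`
    have hSC : (S : Subgroup G) ⊔ Subgroup.centralizer (N : Set G) = ⊤ := by
      rw [← Subgroup.index_eq_one]
      obtain ⟨n, hn⟩ := hq.exists_card_eq
      have h1 : ((S : Subgroup G) ⊔ Subgroup.centralizer (N : Set G)).index ∣ p ^ n := by
        rw [← hn, ← Subgroup.index_eq_card]
        exact Subgroup.index_dvd_of_le le_sup_right
      have h2 : ((S : Subgroup G) ⊔ Subgroup.centralizer (N : Set G)).index ∣
          (S : Subgroup G).index := Subgroup.index_dvd_of_le le_sup_left
      obtain ⟨j, hjn, hjeq⟩ := (Nat.dvd_prime_pow hp).mp h1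
      cases j with
      | zero => simpa using hjeq
      | succ j =>
        exfalso
        have hp1 : p ∣ ((S : Subgroup G) ⊔ Subgroup.centralizer (N : Set G)).index := by
          rw [hjeq]; exact dvd_pow_self p (Nat.succ_ne_zero j)
        exact S.not_dvd_index (hp1.trans h2)
    -- fixed point of the conjugation action of S on N
    letI : MulAction ↥S ↥N :=
      MulAction.compHom _ ((MulAut.conjNormal (H := N)).comp (S : Subgroup G).subtype)
    have hsmul : ∀ (s : ↥S) (n : ↥N), ((s • n : ↥N) : G) = (s : G) * n * (s : G)⁻¹ :=
      fun s n => rfl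
    have h1lt : 1 < Nat.card ↥N := (Subgroup.one_lt_card_iff_ne_bot N).mpr hbot
    obtain ⟨nn, hnn⟩ := IsPGroup.iff_card.mp hNp
    have hpN : p ∣ Nat.card ↥N := by
      rw [hnn]
      refine dvd_pow_self p ?_
      rintro rfl
      rw [hnn] at h1lt
      simp at h1lt
    have hmod := S.isPGroup'.card_modEq_card_fixedPoints (↥N)
    have hpfix : p ∣ Nat.card (fixedPoints ↥S ↥N) :=
      (Nat.modEq_zero_iff_dvd).mp (hmod.symm.trans ((Nat.modEq_zero_iff_dvd).mpr hpN))
    have hone : (⟨1, N.one_mem⟩ : ↥N) ∈ fixedPoints ↥S ↥N := by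
      rw [MulAction.mem_fixedPoints]
      intro s
      apply Subtype.ext
      rw [hsmul]
      simp
    haveI : Nonempty ↥(fixedPoints ↥S ↥N) := ⟨⟨_, hone⟩⟩
    have hpos : 0 < Nat.card ↥(fixedPoints ↥S ↥N) := Nat.card_pos
    have hnontriv : 1 < Nat.card ↥(fixedPoints ↥S ↥N) := by
      have := Nat.le_of_dvd hpos hpfix
      have := hp.two_le
      omega
    haveI : Nontrivial ↥(fixedPoints ↥S ↥N) := Finite.one_lt_card_iff_nontrivial.mp hnontriv
    obtain ⟨x, hxne⟩ := exists_ne (⟨⟨1, N.one_mem⟩, hone⟩ : ↥(fixedPoints ↥S ↥N))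
    have hzne : (x : ↥N) ≠ 1 := fun h => hxne (Subtype.ext h)
    have hzfix : ∀ s : ↥S, (s : G) * ((x : ↥N) : G) * (s : G)⁻¹ = ((x : ↥N) : G) := by
      intro s
      have hfix := MulAction.mem_fixedPoints.mp x.2 s
      rw [← hsmul s (x : ↥N), hfix]
    have hzcen : (((x : ↥N) : G)) ∈ Subgroup.center G := by
      rw [Subgroup.mem_center_iff]
      intro g
      have hg : g ∈ ((S : Subgroup G) ⊔ Subgroup.centralizer (N : Set G)) := by
        rw [hSC]; trivial
      rw [← SetLike.mem_coe, Subgroup.mul_normal] at hg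
      obtain ⟨s, hs, c, hc, rfl⟩ := hg
      have hcz : ((x : ↥N) : G) * c = c * ((x : ↥N) : G) :=
        Subgroup.mem_centralizer_iff.mp hc _ (x : ↥N).2
      have hsz : s * ((x : ↥N) : G) = ((x : ↥N) : G) * s := by
        have h := hzfix ⟨s, hs⟩
        calc s * ((x : ↥N) : G) = (s * ((x : ↥N) : G) * s⁻¹) * s := by group
          _ = ((x : ↥N) : G) * s := by rw [h]
      calc s * c * ((x : ↥N) : G) = s * (((x : ↥N) : G) * c) := by rw [mul_assoc, ← hcz]
        _ = ((x : ↥N) : G) * (s * c) := by rw [← mul_assoc, hsz, mul_assoc]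
    -- quotient by the central subgroup Kc
    haveI hKcn : (Subgroup.center G ⊓ N).Normal := by
      constructor
      intro y hy g
      have e : g * y * g⁻¹ = y := by
        calc g * y * g⁻¹ = y * g * g⁻¹ := by rw [Subgroup.mem_center_iff.mp hy.1 g]
          _ = y := by group
      rw [e]; exact hy
    set Kc := Subgroup.center G ⊓ N with hKcd
    set π := QuotientGroup.mk' Kc with hπd
    set N' := N.map π with hN'd
    haveI hN'n : N'.Normal := hNn.map π (QuotientGroup.mk'_surjective Kc)
    have hN'p : IsPGroup p N' := hNp.map π
    have hCmap : ∀ c ∈ Subgroup.centralizer (N : Set G),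
        π c ∈ Subgroup.centralizer (N' : Set (G ⧸ Kc)) := by
      intro c hc
      rw [Subgroup.mem_centralizer_iff]
      rintro y ⟨n, hn, rfl⟩
      rw [← map_mul, ← map_mul, Subgroup.mem_centralizer_iff.mp hc n hn]
    have hker : ∀ y ∈ Subgroup.centralizer (N : Set G),
        ((QuotientGroup.mk' (Subgroup.centralizer (N' : Set (G ⧸ Kc)))).comp π) y = 1 := by
      intro y hy
      rw [MonoidHom.comp_apply]
      rw [QuotientGroup.mk'_apply, QuotientGroup.eq_one_iff]
      exact hCmap y hy
    set ψ := QuotientGroup.lift (Subgroup.centralizer (N : Set G))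
      ((QuotientGroup.mk' (Subgroup.centralizer (N' : Set (G ⧸ Kc)))).comp π) hker with hψd
    have hψ : Function.Surjective ψ := by
      intro y
      obtain ⟨w, rfl⟩ := QuotientGroup.mk'_surjective _ y
      obtain ⟨g, rfl⟩ := QuotientGroup.mk'_surjective Kc w
      exact ⟨QuotientGroup.mk g, rfl⟩
    have hq' : IsPGroup p ((G ⧸ Kc) ⧸ Subgroup.centralizer (N' : Set (G ⧸ Kc))) :=
      hq.of_surjective ψ hψ
    -- cardinality drop
    have hφns : Function.Surjective (π.subgroupMap N) := π.subgroupMap_surjective N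
    have hzker : (π.subgroupMap N) (x : ↥N) = 1 := by
      apply Subtype.ext
      show π ((x : ↥N) : G) = 1
      rw [QuotientGroup.mk'_apply, QuotientGroup.eq_one_iff]
      exact ⟨hzcen, (x : ↥N).2⟩
    have hcardlt : Nat.card ↥N' < Nat.card ↥N := by
      have e1 := Subgroup.card_eq_card_quotient_mul_card_subgroup (π.subgroupMap N).ker
      have e2 : Nat.card (↥N ⧸ (π.subgroupMap N).ker) = Nat.card ↥N' :=
        Nat.card_congr (QuotientGroup.quotientKerEquivOfSurjective _ hφns).toEquiv
      have e3 : 1 < Nat.card (π.subgroupMap N).ker := by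
        rw [Subgroup.one_lt_card_iff_ne_bot]
        intro hk
        have hm : (x : ↥N) ∈ (π.subgroupMap N).ker := MonoidHom.mem_ker.mpr hzker
        rw [hk] at hm
        exact hzne (Subgroup.mem_bot.mp hm)
      have e4 : 0 < Nat.card ↥N' := Nat.card_pos
      calc Nat.card ↥N' = Nat.card (↥N ⧸ (π.subgroupMap N).ker) := e2.symm
        _ < Nat.card (↥N ⧸ (π.subgroupMap N).ker) * Nat.card (π.subgroupMap N).ker :=
            (Nat.lt_mul_iff_one_lt_right (by omega)).mpr e3
        _ = Nat.card ↥N := e1.symm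
    have hIH : N' ≤ hypercenter (G ⧸ Kc) := IH (G ⧸ Kc) p hp N' hN'p hq' (by omega)
    -- transfer back
    obtain ⟨m, hm⟩ := aux_exists_hypercenter_eq (G ⧸ Kc)
    have hK1 : Kc ≤ Subgroup.upperCentralSeries G 1 := by
      rw [Subgroup.upperCentralSeries_one]; exact inf_le_left
    intro y hy
    have h5 : π y ∈ Subgroup.upperCentralSeries (G ⧸ Kc) m := by
      rw [← hm]
      exact hIH (Subgroup.mem_map_of_mem π hy)
    have h6 := aux_comap_ucs_le Kc hK1 m (Subgroup.mem_comap.mpr h5)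
    exact le_iSup (Subgroup.upperCentralSeries G) (1 + m) h6

end AuxiliaryLemmas3
section AuxiliaryLemmas4

open Subgroup MulAction

variable {G : Type*} [Group G]

lemma aux_hypercenter_le_of_maximal [Finite G] {V : Subgroup G}
    (hV : IsMaximalNilpotent V) : hypercenter G ≤ V := by
  obtain ⟨m, hm⟩ := aux_exists_hypercenter_eq G
  rw [hm]
  haveI : Group.IsNilpotent ↥V := hV.1
  have h1 : (Subgroup.upperCentralSeries G m).subgroupOf (V ⊔ Subgroup.upperCentralSeries G m) ≤
      Subgroup.upperCentralSeries ↥(V ⊔ Subgroup.upperCentralSeries G m) m :=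
    aux_ucs_subgroupOf_le (V ⊔ Subgroup.upperCentralSeries G m) m
  have h2 : Group.IsNilpotent
      (↥(V ⊔ Subgroup.upperCentralSeries G m) ⧸
        (Subgroup.upperCentralSeries G m).subgroupOf (V ⊔ Subgroup.upperCentralSeries G m)) :=
    nilpotent_of_mulEquiv (QuotientGroup.quotientInfEquivProdNormalQuotient V
      (Subgroup.upperCentralSeries G m))
  have h3 : Group.IsNilpotent ↥(V ⊔ Subgroup.upperCentralSeries G m) :=
    aux_nilpotent_of_quotient h1 h2
  have h4 : V ⊔ Subgroup.upperCentralSeries G m = V := hV.2 _ h3 le_sup_left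
  have h5 : Subgroup.upperCentralSeries G m ≤ V ⊔ Subgroup.upperCentralSeries G m := le_sup_right
  rw [h4] at h5
  exact h5

lemma aux_quotient_pgroup [Finite G] {V N : Subgroup G} [N.Normal]
    (hNV : N ≤ V) (hVnil : Group.IsNilpotent ↥V)
    {p : ℕ} (hp : p.Prime) (hNp : IsPGroup p N)
    (hFV : FittingSubgroup G ⊔ V = ⊤) :
    IsPGroup p (G ⧸ Subgroup.centralizer (N : Set G)) := by
  haveI : Fact p.Prime := ⟨hp⟩
  set π := QuotientGroup.mk' (Subgroup.centralizer (N : Set G)) with hπd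
  obtain ⟨M, hMn, hMp, hMmax⟩ := aux_exists_pCore p (G ⧸ Subgroup.centralizer (N : Set G))
  haveI := hMn
  -- the p-Sylow subgroup of V
  haveI : Finite (Sylow p ↥V) :=
    Finite.of_injective (fun P : Sylow p ↥V => (P : Subgroup ↥V))
      (fun P Q h => Sylow.ext h)
  obtain ⟨R0⟩ : Nonempty (Sylow p ↥V) := inferInstance
  have hR0n : (R0 : Subgroup ↥V).Normal := aux_sylow_normal hVnil hp R0
  -- image of V is a p-group
  have hVeq : V.map π = ⨆ (q : ℕ) (_ : q.Prime) (R : Sylow q ↥V),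
      ((R : Subgroup ↥V).map V.subtype).map π := by
    conv_lhs => rw [aux_sylow_decomp V]
    simp only [Subgroup.map_iSup]
  have hVle : V.map π ≤ ((R0 : Subgroup ↥V).map V.subtype).map π := by
    rw [hVeq]
    refine iSup_le fun q => iSup_le fun hq => iSup_le fun R => ?_
    by_cases hqp' : q = p
    · subst hqp'
      haveI := Sylow.unique_of_normal R0 hR0n
      have : R = R0 := Subsingleton.elim R R0
      rw [this]
    · -- q ≠ p : this Sylow subgroup centralizes N
      haveI : Fact q.Prime := ⟨hq⟩
      have hRn : (R : Subgroup ↥V).Normal := aux_sylow_normal hVnil hq R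
      have hBn : (N.subgroupOf V).Normal := Subgroup.Normal.subgroupOf ‹N.Normal› V
      have hBp : IsPGroup p (N.subgroupOf V) :=
        hNp.of_equiv (Subgroup.subgroupOfEquivOfLe hNV).symm
      have hcop : Nat.Coprime (Nat.card ↥(R : Subgroup ↥V)) (Nat.card ↥(N.subgroupOf V)) := by
        obtain ⟨a, ha⟩ := IsPGroup.iff_card.mp R.isPGroup'
        obtain ⟨b, hb⟩ := IsPGroup.iff_card.mp hBp
        rw [ha, hb]
        exact Nat.Coprime.pow _ _ ((Nat.coprime_primes hq hp).mpr hqp')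
      have hRC : (R : Subgroup ↥V).map V.subtype ≤ Subgroup.centralizer (N : Set G) := by
        rintro y ⟨r, hr, rfl⟩
        rw [Subgroup.mem_centralizer_iff]
        intro n hn
        have hnV : n ∈ V := hNV hn
        have hcomm := aux_commute_of_coprime hRn hBn hcop r hr ⟨n, hnV⟩
          (Subgroup.mem_subgroupOf.mpr hn)
        exact (congrArg Subtype.val hcomm).symm
      calc ((R : Subgroup ↥V).map V.subtype).map π ≤
            (Subgroup.centralizer (N : Set G)).map π := Subgroup.map_mono hRC
        _ = ⊥ := (Subgroup.map_eq_bot_iff _).mpr (by rw [hπd, QuotientGroup.ker_mk'])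
        _ ≤ _ := bot_le
  have hTp : IsPGroup p (((R0 : Subgroup ↥V).map V.subtype).map π) :=
    (R0.isPGroup'.map V.subtype).map π
  -- image of the Fitting subgroup is contained in M
  have hFle : (FittingSubgroup G).map π ≤ M := by
    show (⨆ (H : Subgroup G) (_ : H.Normal ∧ Group.IsNilpotent H), H).map π ≤ M
    rw [Subgroup.map_iSup]
    refine iSup_le fun H => ?_
    rw [Subgroup.map_iSup]
    refine iSup_le fun hH => ?_
    haveI hHn : H.Normal := hH.1
    have hHeq : H.map π = ⨆ (q : ℕ) (_ : q.Prime) (R : Sylow q ↥H),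
        ((R : Subgroup ↥H).map H.subtype).map π := by
      conv_lhs => rw [aux_sylow_decomp H]
      simp only [Subgroup.map_iSup]
    rw [hHeq]
    refine iSup_le fun q => iSup_le fun hq => iSup_le fun R => ?_
    haveI : Fact q.Prime := ⟨hq⟩
    have hRn : (R : Subgroup ↥H).Normal := aux_sylow_normal hH.2 hq R
    haveI := hRn
    haveI : Finite (Sylow q ↥H) :=
      Finite.of_injective (fun P : Sylow q ↥H => (P : Subgroup ↥H))
        (fun P Q h => Sylow.ext h)
    haveI hRc : (R : Subgroup ↥H).Characteristic := Sylow.characteristic_of_normal R hRn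
    haveI hRGn : ((R : Subgroup ↥H).map H.subtype).Normal := aux_map_subtype_normal _
    by_cases hqp' : q = p
    · subst hqp'
      exact hMmax _ (hRGn.map π (QuotientGroup.mk'_surjective _))
        ((R.isPGroup'.map H.subtype).map π)
    · -- q ≠ p : coprime normal subgroups commute
      have hcop : Nat.Coprime (Nat.card ↥((R : Subgroup ↥H).map H.subtype)) (Nat.card ↥N) := by
        obtain ⟨a, ha⟩ := IsPGroup.iff_card.mp (R.isPGroup'.map H.subtype)
        obtain ⟨b, hb⟩ := IsPGroup.iff_card.mp hNp
        rw [ha, hb]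
        exact Nat.Coprime.pow _ _ ((Nat.coprime_primes hq hp).mpr hqp')
      have hRC : (R : Subgroup ↥H).map H.subtype ≤ Subgroup.centralizer (N : Set G) := by
        intro y hy
        rw [Subgroup.mem_centralizer_iff]
        intro n hn
        exact (aux_commute_of_coprime hRGn ‹N.Normal› hcop y hy n hn).symm
      calc ((R : Subgroup ↥H).map H.subtype).map π ≤
            (Subgroup.centralizer (N : Set G)).map π := Subgroup.map_mono hRC
        _ = ⊥ := (Subgroup.map_eq_bot_iff _).mpr (by rw [hπd, QuotientGroup.ker_mk'])
        _ ≤ M := bot_le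
  -- combine
  have htop : (⊤ : Subgroup (G ⧸ Subgroup.centralizer (N : Set G))) =
      (FittingSubgroup G).map π ⊔ V.map π := by
    rw [← Subgroup.map_sup, hFV, ← MonoidHom.range_eq_map]
    exact (MonoidHom.range_eq_top.mpr (QuotientGroup.mk'_surjective _)).symm
  have hle2 : (⊤ : Subgroup (G ⧸ Subgroup.centralizer (N : Set G))) ≤
      ((R0 : Subgroup ↥V).map V.subtype).map π ⊔ M := by
    rw [htop]
    exact sup_le (hFle.trans le_sup_right) (hVle.trans le_sup_left)
  have hTM : IsPGroup p ↥(((R0 : Subgroup ↥V).map V.subtype).map π ⊔ M) :=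
    IsPGroup.to_sup_of_normal_right hTp hMp
  exact (hTM.to_le hle2).of_equiv Subgroup.topEquiv

end AuxiliaryLemmas4
theorem normalCore_eq_hypercenter_of_frobenius_nonsubnormal
    (G : Type*) [Group G] [Finite G] (hnil : ¬Group.IsNilpotent G)
    (h : ∀ (p : ℕ) (P : Subgroup G), p.Prime → IsPGroup p P → ¬_root_.IsSubnormal P → FrobeniusNC p P) :
    ∀ V : Subgroup G, IsMaximalNilpotent V → FittingSubgroup G ⊔ V = ⊤ →
      V.normalCore = hypercenter G := by
  intro V hV hFV
  refine le_antisymm ?_ (Subgroup.normal_le_normalCore.mpr (aux_hypercenter_le_of_maximal hV))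
  haveI hVnil : Group.IsNilpotent ↥V := hV.1
  haveI hWn : V.normalCore.Normal := V.normalCore_normal
  haveI hWnil : Group.IsNilpotent ↥V.normalCore :=
    nilpotent_of_mulEquiv (Subgroup.subgroupOfEquivOfLe V.normalCore_le)
  have hmain : ∀ (p : ℕ), p.Prime → ∀ (Q : Sylow p ↥V.normalCore),
      (Q : Subgroup ↥V.normalCore).map V.normalCore.subtype ≤ hypercenter G := by
    intro p hp Q
    haveI : Fact p.Prime := ⟨hp⟩
    have hQn : (Q : Subgroup ↥V.normalCore).Normal := aux_sylow_normal hWnil hp Q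
    haveI := hQn
    haveI : Finite (Sylow p ↥V.normalCore) :=
      Finite.of_injective (fun P : Sylow p ↥V.normalCore => (P : Subgroup ↥V.normalCore))
        (fun P R hh => Sylow.ext hh)
    haveI hQc : (Q : Subgroup ↥V.normalCore).Characteristic :=
      Sylow.characteristic_of_normal Q hQn
    haveI hNn : ((Q : Subgroup ↥V.normalCore).map V.normalCore.subtype).Normal :=
      aux_map_subtype_normal _
    have hNp : IsPGroup p ((Q : Subgroup ↥V.normalCore).map V.normalCore.subtype) :=
      Q.isPGroup'.map V.normalCore.subtype
    have hNV : (Q : Subgroup ↥V.normalCore).map V.normalCore.subtype ≤ V :=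
      (Subgroup.map_subtype_le _).trans V.normalCore_le
    have hqp := aux_quotient_pgroup hNV hVnil hp hNp hFV
    exact aux_le_hypercenter_of_pgroup_quotient
      (Nat.card ↥((Q : Subgroup ↥V.normalCore).map V.normalCore.subtype)) G p hp
      ((Q : Subgroup ↥V.normalCore).map V.normalCore.subtype) hNp hqp le_rfl
  calc V.normalCore
      = ⨆ (q : ℕ) (_ : q.Prime) (Q : Sylow q ↥V.normalCore),
          (Q : Subgroup ↥V.normalCore).map V.normalCore.subtype :=
        aux_sylow_decomp V.normalCore
    _ ≤ hypercenter G := iSup_le fun q => iSup_le fun hq => iSup_le fun Q => hmain q hq Q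
end

section
/- Let G be a finite soluble group such that for every prime p dividing |G| and every Sylow p-subgroup P of G, the normalizer N_G(P) is p-decomposable. Then G is nilpotent. -/
open Subgroup

/-- A group `X` is `p`-decomposable if it is the internal direct product of a normal
`p`-subgroup and a normal subgroup of order coprime to `p`
(i.e. `X = O_p(X) × O_{p'}(X)`). -/
def PDecomposable (p : ℕ) (X : Type*) [Group X] : Prop :=
  ∃ H K : Subgroup X, H.Normal ∧ K.Normal ∧ IsPGroup p H ∧
    Nat.Coprime (Nat.card K) p ∧ H ⊓ K = ⊥ ∧ H ⊔ K = ⊤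

theorem aux_pgroup_coprime_eq_bot {Y : Type*} [Group Y] [Finite Y] {p : ℕ} [Fact p.Prime]
    {S : Subgroup Y} (hS : IsPGroup p S) (h : Nat.Coprime (Nat.card S) p) : S = ⊥ := by
  obtain ⟨n, hn⟩ := IsPGroup.iff_card.mp hS
  rw [← Subgroup.card_eq_one, hn]
  rcases Nat.eq_zero_or_pos n with rfl | hn0
  · simp
  · exfalso
    have hd : p ∣ Nat.gcd (Nat.card ↥S) p := Nat.dvd_gcd (hn ▸ dvd_pow_self p hn0.ne') dvd_rfl
    rw [h] at hd
    exact (Fact.out : p.Prime).one_lt.ne' (Nat.eq_one_of_dvd_one hd)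

theorem PDecomposable.of_surjective {X Y : Type*} [Group X] [Group Y] [Finite X]
    {f : X →* Y} (hf : Function.Surjective f) {p : ℕ} [Fact p.Prime]
    (hX : PDecomposable p X) : PDecomposable p Y := by
  have : Finite Y := Finite.of_surjective f hf
  obtain ⟨H, K, hHn, hKn, hHp, hKcop, hinf, hsup⟩ := hX
  have hKc : Nat.Coprime (Nat.card (K.map f)) p :=
    Nat.Coprime.coprime_dvd_left (Subgroup.card_dvd_of_surjective _ (f.subgroupMap_surjective K)) hKcop
  refine ⟨H.map f, K.map f, hHn.map f hf, hKn.map f hf, hHp.map f, hKc, ?_, ?_⟩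
  · exact aux_pgroup_coprime_eq_bot ((hHp.map f).to_le inf_le_left)
      (Nat.Coprime.coprime_dvd_left (Subgroup.card_dvd_of_le inf_le_right) hKc)
  · rw [← Subgroup.map_sup, hsup, ← MonoidHom.range_eq_map, MonoidHom.range_eq_top]
    exact hf

set_option maxHeartbeats 1000000 in
theorem aux_map_normalizer_mk' {G : Type*} [Group G] [Finite G] {p : ℕ} [Fact p.Prime]
    (N : Subgroup G) [N.Normal] (P : Sylow p G) :
    normalizer (((P : Subgroup G).map (QuotientGroup.mk' N)) : Set (G ⧸ N))
      = (normalizer ((P : Subgroup G) : Set G)).map (QuotientGroup.mk' N) := by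
  set π := QuotientGroup.mk' N with hπdef
  have hπ : Function.Surjective π := QuotientGroup.mk'_surjective N
  refine le_antisymm ?_ ?_
  · -- hard direction
    set Q : Subgroup G := Subgroup.comap π ((P : Subgroup G).map π) with hQ
    have hPQ : (P : Subgroup G) ≤ Q := le_comap_map _ _
    set M : Subgroup G := Subgroup.comap π (normalizer (((P : Subgroup G).map π) : Set (G ⧸ N))) with hM
    have hQM : Q ≤ M := comap_mono le_normalizer
    have hPM : (P : Subgroup G) ≤ M := hPQ.trans hQM
    haveI : (Q.subgroupOf M).Normal := by
      constructor
      rintro ⟨q, hqM⟩ hq ⟨m, hmM⟩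
      simp only [mem_subgroupOf] at hq ⊢
      have hmem : π q ∈ (P : Subgroup G).map π := hq
      have hnorm := (mem_normalizer_iff.mp (mem_comap.mp hmM)) (π q)
      have : π m * π q * (π m)⁻¹ ∈ (P : Subgroup G).map π := hnorm.mp hmem
      rw [hQ, mem_comap]; show π (m * q * m⁻¹) ∈ _; rw [map_mul, map_mul, map_inv]; exact this
    have key := Sylow.normalizer_sup_eq_top' (N := Q.subgroupOf M) (P.subtype hPM)
      (by rw [Sylow.coe_subtype]; exact comap_mono hPQ)
    intro x hx
    obtain ⟨g, rfl⟩ := hπ x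
    have hgM : g ∈ M := mem_comap.mpr hx
    have hmem : (⟨g, hgM⟩ : M) ∈ (normalizer ((P.subtype hPM : Subgroup M) : Set M) ⊔ Q.subgroupOf M) := by
      rw [show normalizer ((P.subtype hPM : Subgroup M) : Set M) ⊔ Q.subgroupOf M = ⊤ from key]; trivial
    have hmem' : (⟨g, hgM⟩ : M) ∈ (((normalizer ((P.subtype hPM : Subgroup M) : Set M) ⊔ Q.subgroupOf M) : Subgroup M) : Set M) := hmem
    rw [Subgroup.mul_normal (normalizer ((P.subtype hPM : Subgroup M) : Set M)) (Q.subgroupOf M)] at hmem'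
    obtain ⟨a, ha, b, hb, hab⟩ := hmem'
    have hgab : g = (a : G) * (b : G) := by
      have := congrArg (Subtype.val) hab
      simpa using this.symm
    have haP : (a : G) ∈ normalizer ((P : Subgroup G) : Set G) := by
      rw [mem_normalizer_iff]
      intro t
      constructor
      · intro ht
        have htM : t ∈ M := hPM ht
        have := (mem_normalizer_iff.mp ha ⟨t, htM⟩).mp
          (by rw [Sylow.coe_subtype]; exact mem_subgroupOf.mpr ht)
        rw [Sylow.coe_subtype] at this
        exact mem_subgroupOf.mp this
      · intro ht
        have htM : (a : G) * t * (a : G)⁻¹ ∈ M := hPM ht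
        have ht2 : t ∈ M := by
          have : (a:G)⁻¹ * ((a:G) * t * (a:G)⁻¹) * (a:G) ∈ M :=
            mul_mem (mul_mem (inv_mem a.2) htM) a.2
          simpa [mul_assoc] using this
        have := (mem_normalizer_iff.mp ha ⟨t, ht2⟩).mpr
          (by rw [Sylow.coe_subtype]
              refine mem_subgroupOf.mpr ?_
              show ((⟨(a:G), a.2⟩ * ⟨t, ht2⟩ * (⟨(a:G), a.2⟩)⁻¹ : M) : G) ∈ (P : Subgroup G)
              simpa using ht)
        rw [Sylow.coe_subtype] at this
        exact mem_subgroupOf.mp this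
    have hbQ : (b : G) ∈ Q := mem_subgroupOf.mp hb
    rw [hgab, map_mul]
    refine mul_mem (mem_map_of_mem π haP) ?_
    have : π (b : G) ∈ (P : Subgroup G).map π := mem_comap.mp hbQ
    exact (map_mono (le_normalizer : (P : Subgroup G) ≤ _)) this
  · -- easy direction
    intro x hx
    obtain ⟨g, hg, rfl⟩ := hx
    rw [mem_normalizer_iff]
    intro y
    constructor
    · rintro ⟨t, ht, rfl⟩
      exact ⟨g * t * g⁻¹, (mem_normalizer_iff.mp hg t).mp ht, by simp [map_mul]⟩
    · rintro hy
      obtain ⟨t, ht, hty⟩ := hy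
      have : y = π (g⁻¹ * t * g) := by
        have := congrArg (fun z => (π g)⁻¹ * z * (π g)) hty
        simp only [map_mul, map_inv] at this ⊢
        group at this ⊢
        rw [← this]
      rw [this]
      refine mem_map_of_mem π ?_
      have := (mem_normalizer_iff.mp hg (g⁻¹ * t * g)).mpr (by group; exact ht)
      exact this

open scoped commutatorElement in
theorem aux_exists_normal_pgroup (G : Type*) [Group G] [Finite G] [Group.IsSolvable G]
    [Nontrivial G] :
    ∃ (q : ℕ), q.Prime ∧ ∃ N : Subgroup G, N.Normal ∧ IsPGroup q N ∧ N ≠ ⊥ := by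
  obtain ⟨n, hn⟩ := Group.IsSolvable.solvable (G := G)
  have hex : ∃ m, derivedSeries G m = ⊥ := ⟨n, hn⟩
  classical
  have hm0 : Nat.find hex ≠ 0 := by
    intro h0
    have hmeq := Nat.find_spec hex
    rw [h0] at hmeq
    exact (bot_ne_top (α := Subgroup G)).symm (by simpa [derivedSeries] using hmeq)
  obtain ⟨k, hk⟩ := Nat.exists_eq_succ_of_ne_zero hm0
  have hmeq : derivedSeries G (k + 1) = ⊥ := by
    have := Nat.find_spec hex
    rwa [hk] at this
  have hAne : derivedSeries G k ≠ ⊥ := Nat.find_min hex (by omega)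
  set A := derivedSeries G k with hA
  haveI hAnorm : A.Normal := derivedSeries_normal G k
  have hcomm : ∀ x y : A, x * y = y * x := by
    intro x y
    have hc : ⁅(x : G), (y : G)⁆ ∈ (⊥ : Subgroup G) := by
      rw [← hmeq, derivedSeries_succ]
      exact commutator_mem_commutator x.2 y.2
    have : ⁅(x : G), (y : G)⁆ = 1 := by simpa using hc
    have := commutatorElement_eq_one_iff_mul_comm.mp this
    exact Subtype.ext this
  haveI : Nontrivial A := (nontrivial_iff_ne_bot A).mpr hAne
  have hcard : 1 < Nat.card A := Finite.one_lt_card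
  obtain ⟨q, hq, hqdvd⟩ := (Nat.card A).exists_prime_and_dvd (by omega)
  haveI : Fact q.Prime := ⟨hq⟩
  obtain ⟨W⟩ : Nonempty (Sylow q A) := Sylow.nonempty
  letI : CommGroup A := { (inferInstance : Group A) with mul_comm := hcomm }
  haveI hWnorm : (W : Subgroup A).Normal := Subgroup.normal_of_comm _
  haveI hWchar : (W : Subgroup A).Characteristic := Sylow.characteristic_of_normal W hWnorm
  refine ⟨q, hq, (W : Subgroup A).map A.subtype, inferInstance, W.2.map _, ?_⟩
  have hWne : (W : Subgroup A) ≠ ⊥ := W.ne_bot_of_dvd_card hqdvd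
  intro hbot
  apply hWne
  rwa [Subgroup.map_eq_bot_iff_of_injective _ (Subgroup.subtype_injective A)] at hbot

universe u

theorem aux_main : ∀ (n : ℕ) (G : Type u) [Group G] [Finite G], Nat.card G = n →
    IsSolvable G →
    (∀ p : ℕ, p.Prime → p ∣ Nat.card G → ∀ P : Sylow p G,
      PDecomposable p ↥(normalizer ((P : Subgroup G) : Set G))) →
    Group.IsNilpotent G := by
  intro n
  induction n using Nat.strong_induction_on with
  | _ n ih =>
    intro G _ _ hcard hsol h
    rcases subsingleton_or_nontrivial G with hs | hs
    · infer_instance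
    · obtain ⟨q, hq, N, hNnorm, hNq, hNne⟩ := @aux_exists_normal_pgroup G _ _ hsol _
      haveI : Fact q.Prime := ⟨hq⟩
      haveI := hNnorm
      have hπ : Function.Surjective (QuotientGroup.mk' N) := QuotientGroup.mk'_surjective N
      haveI : Nontrivial N := (nontrivial_iff_ne_bot N).mpr hNne
      have hcardN : 1 < Nat.card N := Finite.one_lt_card
      have hcardQlt : Nat.card (G ⧸ N) < n := by
        have heq := Subgroup.card_eq_card_quotient_mul_card_subgroup N
        have hpos : 0 < Nat.card (G ⧸ N) := Nat.card_pos
        rw [hcard] at heq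
        nlinarith
      have hqnil : Group.IsNilpotent (G ⧸ N) := by
        refine ih _ hcardQlt (G ⧸ N) rfl (haveI : Group.IsSolvable G := hsol; (inferInstance : Group.IsSolvable (G ⧸ N))) ?_
        intro p hp hpdvd P'
        haveI : Fact p.Prime := ⟨hp⟩
        obtain ⟨P, rfl⟩ := Sylow.mapSurjective_surjective hπ p P'
        have hco : ((P.mapSurjective hπ : Sylow p (G ⧸ N)) : Subgroup (G ⧸ N))
            = (P : Subgroup G).map (QuotientGroup.mk' N) := rfl
        rw [hco, aux_map_normalizer_mk' N P]
        exact (h p hp (hpdvd.trans (Subgroup.card_quotient_dvd_card N)) P).of_surjective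
          ((QuotientGroup.mk' N).subgroupMap_surjective _)
      obtain ⟨Q⟩ : Nonempty (Sylow q G) := Sylow.nonempty
      have hQmap_normal : (((Q : Subgroup G)).map (QuotientGroup.mk' N)).Normal := by
        have h4 := ((isNilpotent_of_finite_tfae (G := G ⧸ N)).out 0 3).mp hqnil
        exact h4 q ⟨hq⟩ (Q.mapSurjective hπ)
      have hQN : (Q : Subgroup G) ⊔ N = Q :=
        Q.3 (IsPGroup.to_sup_of_normal_right Q.2 hNq) le_sup_left
      have hQnormal : (Q : Subgroup G).Normal := by
        have hc : Subgroup.comap (QuotientGroup.mk' N)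
            (((Q : Subgroup G)).map (QuotientGroup.mk' N)) = (Q : Subgroup G) := by
          rw [Subgroup.comap_map_eq, QuotientGroup.ker_mk', hQN]
        rw [← hc]
        exact hQmap_normal.comap (QuotientGroup.mk' N)
      have hqdvd : q ∣ Nat.card G := by
        obtain ⟨m, hm0, hmcard⟩ := hNq.nontrivial_iff_card.mp inferInstance
        exact dvd_trans (hmcard ▸ dvd_pow_self q hm0.ne') N.card_subgroup_dvd_card
      have hPD := h q hq hqdvd Q
      have hnorm_top : normalizer ((Q : Subgroup G) : Set G) = ⊤ := (haveI := hQnormal; normalizer_eq_top (Q : Subgroup G))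
      rw [hnorm_top] at hPD
      have hPDG : PDecomposable q G :=
        hPD.of_surjective (f := (Subgroup.topEquiv (G := G)).toMonoidHom)
          Subgroup.topEquiv.surjective
      obtain ⟨H, K, hHn, hKn, hHp, hKcop, hinf, hsup⟩ := hPDG
      haveI := hHn; haveI := hKn
      have hNH : N ≤ H := by
        intro x hx
        have hx2 : x ∈ ((H ⊔ K : Subgroup G) : Set G) := by
          rw [hsup]; exact Subgroup.mem_top x
        rw [Subgroup.mul_normal H K] at hx2
        obtain ⟨a, ha, b, hb, hab⟩ := hx2
        have hbHN : b ∈ (H ⊔ N) ⊓ K := by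
          refine ⟨?_, hb⟩
          have hbeq : b = a⁻¹ * x := by rw [← hab]; group
          rw [hbeq]
          exact mul_mem ((le_sup_left : H ≤ H ⊔ N) (inv_mem ha))
            ((le_sup_right : N ≤ H ⊔ N) hx)
        have hbot : (H ⊔ N) ⊓ K = ⊥ := aux_pgroup_coprime_eq_bot
          ((IsPGroup.to_sup_of_normal_right hHp hNq).to_le inf_le_left)
          (Nat.Coprime.coprime_dvd_left (card_dvd_of_le inf_le_right) hKcop)
        rw [hbot, Subgroup.mem_bot] at hbHN
        rw [← hab, hbHN]
        simpa using ha
      have hinj : Function.Injective ⇑((QuotientGroup.mk' N).comp K.subtype) := by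
        rw [← MonoidHom.ker_eq_bot_iff, eq_bot_iff]
        rintro x hx
        have hx1 : (QuotientGroup.mk' N) (x : G) = 1 := hx
        have hxN : (x : G) ∈ N := by
          rwa [QuotientGroup.mk'_apply, QuotientGroup.eq_one_iff] at hx1
        have hxHK : (x : G) ∈ H ⊓ K := ⟨hNH hxN, x.2⟩
        rw [hinf, Subgroup.mem_bot] at hxHK
        exact Subgroup.mem_bot.mpr (Subtype.ext hxHK)
      haveI := hqnil
      have hKnil : Group.IsNilpotent K :=
        nilpotent_of_mulEquiv (MonoidHom.ofInjective hinj).symm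
      have hHnil : Group.IsNilpotent H := hHp.isNilpotent
      have hcomm : ∀ (x : H) (y : K), Commute (H.subtype x) (K.subtype y) := fun x y =>
        Subgroup.commute_of_normal_of_disjoint H K hHn hKn (disjoint_iff.mpr hinf)
          _ _ x.2 y.2
      have hfsurj : Function.Surjective (MonoidHom.noncommCoprod H.subtype K.subtype hcomm) := by
        intro g
        have hg : g ∈ ((H ⊔ K : Subgroup G) : Set G) := by
          rw [hsup]; exact Subgroup.mem_top g
        rw [Subgroup.mul_normal H K] at hg
        obtain ⟨a, ha, b, hb, hab⟩ := hg
        exact ⟨(⟨a, ha⟩, ⟨b, hb⟩), hab⟩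
      haveI : Group.IsNilpotent (↥H × ↥K) := by
        haveI := hKnil; haveI := hHnil; infer_instance
      exact nilpotent_of_surjective _ hfsurj

theorem nilpotent_of_sylow_normalizers_decomposable
    (G : Type*) [Group G] [Finite G] (hsol : IsSolvable G)
    (h : ∀ p : ℕ, p.Prime → p ∣ Nat.card G → ∀ P : Sylow p G,
      PDecomposable p ↥(normalizer ((P : Subgroup G) : Set G))) :
    Group.IsNilpotent G :=
  aux_main (Nat.card G) G rfl hsol h
end
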